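/- Every trapezoid (convex quadrilateral with at least one pair of parallel edges) which is not a parallelogram is affinely equivalent to a Calabi trapezoid, i.e. to the image of a rectangle [1,α] × [0,1] (for some α > 1) under the map σ(x,y) = (x, xy). -/

import Mathlib

def sigCal (p : ℝ × ℝ) : ℝ × ℝ := (p.1, p.1 * p.2)

lemma calabi_image {α : ℝ} (hα : 1 < α) :
    sigCal '' (Set.Icc 1 α ×ˢ Set.Icc 0 1) =
      {p : ℝ × ℝ | 1 ≤ p.1 ∧ p.1 ≤ α ∧ 0 ≤ p.2 ∧ p.2 ≤ p.1} := by
  ext ⟨x, t⟩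
  constructor
  · rintro ⟨⟨a, b⟩, ⟨⟨ha1, ha2⟩, hb1, hb2⟩, h⟩
    simp only [Set.mem_Icc] at ha1 ha2 hb1 hb2
    simp only [sigCal, Prod.mk.injEq] at h
    have ha1' : (1:ℝ) ≤ a := ha1
    have hb1' : (0:ℝ) ≤ b := hb1
    have hb2' : b ≤ (1:ℝ) := hb2
    obtain ⟨rfl, rfl⟩ := h
    refine ⟨ha1, ha2, by positivity, ?_⟩
    show a * b ≤ a
    nlinarith
  · rintro ⟨h1, h2, h3, h4⟩
    have h1' : (1:ℝ) ≤ x := h1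
    have h3' : (0:ℝ) ≤ t := h3
    have h4' : t ≤ x := h4
    have hx : (0:ℝ) < x := by linarith
    refine ⟨(x, t / x), ⟨⟨h1, h2⟩, by positivity, ?_⟩, ?_⟩
    · show t / x ≤ 1
      rw [div_le_one hx]; exact h4'
    · show ((x, x * (t/x)) : ℝ × ℝ) = (x, t)
      rw [Prod.mk.injEq]
      exact ⟨rfl, by field_simp⟩

lemma calabi_hull {α : ℝ} (hα : 1 < α) :
    sigCal '' (Set.Icc 1 α ×ˢ Set.Icc 0 1) =
      convexHull ℝ ({((1:ℝ),(0:ℝ)), (1,1), (α,α), (α,0)} : Set (ℝ × ℝ)) := by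
  rw [calabi_image hα]
  set V : Set (ℝ × ℝ) := {((1:ℝ),(0:ℝ)), (1,1), (α,α), (α,0)} with hV
  have m1 : ((1:ℝ),(0:ℝ)) ∈ V := by simp [hV]
  have m2 : ((1:ℝ),(1:ℝ)) ∈ V := by simp [hV]
  have m3 : ((α:ℝ),(α:ℝ)) ∈ V := by simp [hV]
  have m4 : ((α:ℝ),(0:ℝ)) ∈ V := by simp [hV]
  have hconv : Convex ℝ {p : ℝ × ℝ | 1 ≤ p.1 ∧ p.1 ≤ α ∧ 0 ≤ p.2 ∧ p.2 ≤ p.1} := by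
    rintro ⟨x, t⟩ ⟨h1, h2, h3, h4⟩ ⟨x', t'⟩ ⟨h1', h2', h3', h4'⟩ a b ha hb hab
    have h1a : (1:ℝ) ≤ x := h1
    have h2a : x ≤ α := h2
    have h3a : (0:ℝ) ≤ t := h3
    have h4a : t ≤ x := h4
    have h1b : (1:ℝ) ≤ x' := h1'
    have h2b : x' ≤ α := h2'
    have h3b : (0:ℝ) ≤ t' := h3'
    have h4b : t' ≤ x' := h4'
    refine ⟨?_, ?_, ?_, ?_⟩
    · show 1 ≤ a * x + b * x'; nlinarith
    · show a * x + b * x' ≤ α; nlinarith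
    · show 0 ≤ a * t + b * t'; nlinarith
    · show a * t + b * t' ≤ a * x + b * x'; nlinarith
  apply Set.Subset.antisymm
  · rintro ⟨x, t⟩ ⟨h1, h2, h3, h4⟩
    have h1' : (1:ℝ) ≤ x := h1
    have h2' : x ≤ α := h2
    have h3' : (0:ℝ) ≤ t := h3
    have h4' : t ≤ x := h4
    have hx : (0:ℝ) < x := by linarith
    have hα1 : (0:ℝ) < α - 1 := by linarith
    set u : ℝ := (x - 1) / (α - 1) with hu
    have hu0 : 0 ≤ u := by rw [hu]; apply div_nonneg <;> linarith
    have hval : (1 - u) * 1 + u * α = x := by rw [hu]; field_simp; ring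
    have hbot : ((x, 0) : ℝ × ℝ) ∈ convexHull ℝ V := by
      apply (convex_convexHull ℝ V).segment_subset
        (subset_convexHull ℝ V m1) (subset_convexHull ℝ V m4)
      refine ⟨1 - u, u, by rw [hu]; rw [sub_nonneg, div_le_one hα1]; linarith, hu0, by ring, ?_⟩
      show ((1-u) * 1 + u * α, (1-u) * 0 + u * 0) = ((x:ℝ), (0:ℝ))
      rw [Prod.mk.injEq]
      exact ⟨hval, by ring⟩
    have htop : ((x, x) : ℝ × ℝ) ∈ convexHull ℝ V := by
      apply (convex_convexHull ℝ V).segment_subset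
        (subset_convexHull ℝ V m2) (subset_convexHull ℝ V m3)
      refine ⟨1 - u, u, by rw [hu]; rw [sub_nonneg, div_le_one hα1]; linarith, hu0, by ring, ?_⟩
      show ((1-u) * 1 + u * α, (1-u) * 1 + u * α) = ((x:ℝ), (x:ℝ))
      rw [Prod.mk.injEq]
      exact ⟨hval, hval⟩
    apply (convex_convexHull ℝ V).segment_subset hbot htop
    refine ⟨1 - t/x, t/x, by rw [sub_nonneg, div_le_one hx]; exact h4', by positivity, by ring, ?_⟩
    show ((1 - t/x) * x + (t/x) * x, (1 - t/x) * 0 + (t/x) * x) = ((x:ℝ), (t:ℝ))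
    rw [Prod.mk.injEq]
    constructor
    · field_simp; ring
    · field_simp; ring
  · apply convexHull_min _ hconv
    rintro p hp
    simp only [hV, Set.mem_insert_iff, Set.mem_singleton_iff] at hp
    rcases hp with rfl|rfl|rfl|rfl <;> refine ⟨?_, ?_, ?_, ?_⟩ <;> (try norm_num) <;> linarith


noncomputable def mkAff (A A' : ℝ × ℝ) (f : (ℝ × ℝ) ≃ₗ[ℝ] (ℝ × ℝ)) : (ℝ × ℝ) ≃ᵃ[ℝ] (ℝ × ℝ) :=
  (AffineEquiv.constVAdd ℝ (ℝ × ℝ) (-A)).trans (f.toAffineEquiv.trans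
    (AffineEquiv.constVAdd ℝ (ℝ × ℝ) A'))

lemma mkAff_apply (A A' : ℝ × ℝ) (f : (ℝ × ℝ) ≃ₗ[ℝ] (ℝ × ℝ)) (p : ℝ × ℝ) :
    mkAff A A' f p = A' + f (p - A) := by
  simp [mkAff, AffineEquiv.trans_apply, sub_eq_neg_add]

lemma key2 (A B C D : ℝ × ℝ) (li : LinearIndependent ℝ ![B - A, C - A]) (c x0 x1 : ℝ)
    (hc : c ≠ 0) (hrel : B - A = c • (C - D)) (hx0 : 0 < x0) (hx1 : 0 < x1)
    (hx : x0 = c * x1) (hne : x0 ≠ x1) :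
    ∃ e : (ℝ × ℝ) ≃ᵃ[ℝ] (ℝ × ℝ),
      e '' convexHull ℝ ({A, B, C, D} : Set (ℝ × ℝ)) =
      convexHull ℝ ({(x0, (0:ℝ)), (x0, x0), (x1, x1), (x1, 0)} : Set (ℝ × ℝ)) := by
  have li' : LinearIndependent ℝ ![((0:ℝ), x0), (x1 - x0, x1)] := by
    rw [linearIndependent_fin2]
    constructor
    · simp only [Matrix.cons_val_one, Matrix.head_cons, ne_eq]
      intro h
      have : x1 = 0 := by simpa using congrArg Prod.snd h
      linarith
    · intro a h
      simp only [Matrix.cons_val_one, Matrix.head_cons, Matrix.cons_val_zero, Prod.smul_mk,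
        smul_eq_mul, Prod.mk.injEq] at h
      obtain ⟨ha, hb⟩ := h
      rcases mul_eq_zero.mp ha with rfl | h
      · simp at hb; linarith
      · exact hne (by linarith)
  have hcard : Fintype.card (Fin 2) = Module.finrank ℝ (ℝ × ℝ) := by simp
  let b := basisOfLinearIndependentOfCardEqFinrank li hcard
  let b' := basisOfLinearIndependentOfCardEqFinrank li' hcard
  let f : (ℝ × ℝ) ≃ₗ[ℝ] (ℝ × ℝ) := b.equiv b' (Equiv.refl _)
  have hfu : f (B - A) = ((0:ℝ), x0) := by
    have : B - A = b 0 := by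
      simp [b, coe_basisOfLinearIndependentOfCardEqFinrank]
    rw [this]
    simp [f, Module.Basis.equiv_apply, b', coe_basisOfLinearIndependentOfCardEqFinrank]
  have hfv : f (C - A) = ((x1 - x0 : ℝ), x1) := by
    have : C - A = b 1 := by
      simp [b, coe_basisOfLinearIndependentOfCardEqFinrank]
    rw [this]
    simp [f, Module.Basis.equiv_apply, b', coe_basisOfLinearIndependentOfCardEqFinrank]
  refine ⟨mkAff A (x0, 0) f, ?_⟩
  have hD : D - A = (C - A) - c⁻¹ • (B - A) := by
    rw [hrel, smul_smul, inv_mul_cancel₀ hc, one_smul]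
    abel
  have heA : mkAff A (x0, 0) f A = (x0, 0) := by
    rw [mkAff_apply, sub_self, map_zero, add_zero]
  have heB : mkAff A (x0, 0) f B = (x0, x0) := by
    rw [mkAff_apply, hfu]; ext <;> simp
  have heC : mkAff A (x0, 0) f C = (x1, x1) := by
    rw [mkAff_apply, hfv]; ext <;> simp
  have heD : mkAff A (x0, 0) f D = (x1, 0) := by
    rw [mkAff_apply, hD, map_sub, map_smul, hfu, hfv]
    have : c⁻¹ * x0 = x1 := by rw [hx]; field_simp
    ext
    · simp
    · simp [this]
  have himg := (mkAff A (x0, 0) f).toAffineMap.image_convexHull ({A, B, C, D} : Set (ℝ × ℝ))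
  rw [AffineEquiv.coe_toAffineMap] at himg
  rw [himg]
  congr 1
  simp only [Set.image_insert_eq, Set.image_singleton, heA, heB, heC, heD]


lemma li_of_not_collinear (A B C : ℝ × ℝ) (h : ¬ Collinear ℝ ({A, B, C} : Set (ℝ × ℝ))) :
    LinearIndependent ℝ ![B - A, C - A] := by
  by_contra hli
  apply h
  rw [linearIndependent_fin2] at hli
  push_neg at hli
  simp only [Matrix.cons_val_one, Matrix.head_cons, Matrix.cons_val_zero] at hli
  rw [collinear_iff_of_mem (Set.mem_insert A {B, C})]
  by_cases hCA : C - A = 0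
  · have hC : C = A := by rwa [sub_eq_zero] at hCA
    refine ⟨B - A, fun p hp => ?_⟩
    simp only [Set.mem_insert_iff, Set.mem_singleton_iff] at hp
    rcases hp with h | h | h
    · exact ⟨0, by rw [h, zero_smul, zero_vadd]⟩
    · exact ⟨1, by rw [h, one_smul]; show B = B - A + A; abel⟩
    · exact ⟨0, by rw [h, hC, zero_smul, zero_vadd]⟩
  · obtain ⟨a, ha⟩ := hli hCA
    refine ⟨C - A, fun p hp => ?_⟩
    simp only [Set.mem_insert_iff, Set.mem_singleton_iff] at hp
    rcases hp with h | h | h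
    · exact ⟨0, by rw [h, zero_smul, zero_vadd]⟩
    · exact ⟨a, by rw [h]; show B = a • (C - A) + A; rw [ha]; abel⟩
    · exact ⟨1, by rw [h, one_smul]; show C = C - A + A; abel⟩

lemma c_pos (A B C D : ℝ × ℝ) (li : LinearIndependent ℝ ![B - A, C - A]) (c : ℝ) (hc : c ≠ 0)
    (hrel : B - A = c • (C - D))
    (hcyc : (openSegment ℝ A C ∩ openSegment ℝ B D).Nonempty) : 0 < c := by
  obtain ⟨p, hp1, hp2⟩ := hcyc
  rw [openSegment] at hp1 hp2
  obtain ⟨a, b, ha, hb, hab, h1⟩ := hp1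
  obtain ⟨a', b', ha', hb', hab', h2⟩ := hp2
  have hD : D - A = (C - A) - c⁻¹ • (B - A) := by
    rw [hrel, smul_smul, inv_mul_cancel₀ hc, one_smul]; abel
  have heq : a • A + b • C = a' • B + b' • D := h1.trans h2.symm
  have hDval : D = A + (C - A) - c⁻¹ • (B - A) := by
    have := hD
    rw [sub_eq_iff_eq_add] at this
    rw [this]; abel
  have key : (a' - b' * c⁻¹) • (B - A) + (b' - b) • (C - A) = 0 := by
    have ha0 : a = 1 - b := by linarith
    have ha0' : a' = 1 - b' := by linarith
    rw [hDval] at heq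
    rw [ha0, ha0'] at heq
    have expand : (a' - b' * c⁻¹) • (B - A) + (b' - b) • (C - A)
        = ((1 - b') • B + b' • (A + (C - A) - c⁻¹ • (B - A))) - ((1 - b) • A + b • C) := by
      rw [ha0']
      simp only [smul_sub, sub_smul, one_smul, smul_add, smul_smul]
      module
    rw [expand, heq, sub_self]
  obtain ⟨e1, e2⟩ := li.eq_zero_of_pair key
  have hb'b : b' = b := by linarith
  have : a' * c = b' := by
    have : a' = b' * c⁻¹ := by linarith
    rw [this]; field_simp
  nlinarith


lemma key (A B C D : ℝ × ℝ)
    (hABC : ¬ Collinear ℝ ({A, B, C} : Set (ℝ × ℝ)))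
    (hcyc : (openSegment ℝ A C ∩ openSegment ℝ B D).Nonempty)
    (c : ℝ) (hrel : B - A = c • (C - D)) (hc1 : c ≠ 1) :
    ∃ α : ℝ, 1 < α ∧ ∃ e : (ℝ × ℝ) ≃ᵃ[ℝ] (ℝ × ℝ),
      e '' convexHull ℝ ({A, B, C, D} : Set (ℝ × ℝ)) =
        sigCal '' (Set.Icc 1 α ×ˢ Set.Icc 0 1) := by
  have li := li_of_not_collinear A B C hABC
  have hc0 : c ≠ 0 := by
    rintro rfl
    rw [zero_smul] at hrel
    exact li.ne_zero 0 (by simpa using hrel)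
  have hcpos := c_pos A B C D li c hc0 hrel hcyc
  have hci : c * c⁻¹ = 1 := mul_inv_cancel₀ hc0
  rcases lt_or_gt_of_ne hc1 with hlt | hgt
  · have hα : 1 < c⁻¹ := by nlinarith
    obtain ⟨e, he⟩ := key2 A B C D li c 1 c⁻¹ hc0 hrel one_pos (by positivity)
      hci.symm (ne_of_lt hα)
    exact ⟨c⁻¹, hα, e, by rw [he, calabi_hull hα]⟩
  · obtain ⟨e, he⟩ := key2 A B C D li c c 1 hc0 hrel hcpos one_pos
      (mul_one c).symm (ne_of_gt hgt)
    refine ⟨c, hgt, e, ?_⟩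
    rw [he, calabi_hull hgt]
    congr 1
    ext p
    simp only [Set.mem_insert_iff, Set.mem_singleton_iff]
    tauto

theorem stmt_9 (s : Fin 4 → ℝ × ℝ)
    (hcol : ∀ i j k : Fin 4, i ≠ j → i ≠ k → j ≠ k →
        ¬ Collinear ℝ ({s i, s j, s k} : Set (ℝ × ℝ)))
    (hext : ∀ i, s i ∈ Set.extremePoints ℝ (convexHull ℝ (Set.range s)))
    (hcyc : (openSegment ℝ (s 0) (s 2) ∩ openSegment ℝ (s 1) (s 3)).Nonempty)
    (htrap : (∃ c : ℝ, s 1 - s 0 = c • (s 2 - s 3)) ∨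
             (∃ c : ℝ, s 2 - s 1 = c • (s 3 - s 0)))
    (hnpar : ¬ ((∃ c : ℝ, s 1 - s 0 = c • (s 2 - s 3)) ∧
                (∃ c : ℝ, s 2 - s 1 = c • (s 3 - s 0)))) :
    ∃ α : ℝ, 1 < α ∧ ∃ e : (ℝ × ℝ) ≃ᵃ[ℝ] (ℝ × ℝ),
      e '' convexHull ℝ (Set.range s) =
        sigCal '' (Set.Icc 1 α ×ˢ Set.Icc 0 1) := by
  have hrange : Set.range s = {s 0, s 1, s 2, s 3} := by
    ext p
    constructor
    · rintro ⟨i, rfl⟩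
      fin_cases i <;> simp
    · rintro (h | h | h | h) <;> exact ⟨_, h.symm⟩
  rcases htrap with ⟨c, hrel⟩ | ⟨c, hrel⟩
  · have hc1 : c ≠ 1 := by
      rintro rfl
      rw [one_smul] at hrel
      refine hnpar ⟨⟨1, by rw [one_smul]; exact hrel⟩, ⟨1, ?_⟩⟩
      rw [one_smul]
      rw [sub_eq_sub_iff_add_eq_add] at hrel ⊢
      linear_combination -hrel
    rw [hrange]
    exact key (s 0) (s 1) (s 2) (s 3)
      (hcol 0 1 2 (by decide) (by decide) (by decide)) hcyc c hrel hc1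
  · have hc1 : c ≠ 1 := by
      rintro rfl
      rw [one_smul] at hrel
      refine hnpar ⟨⟨1, ?_⟩, ⟨1, by rw [one_smul]; exact hrel⟩⟩
      rw [one_smul]
      rw [sub_eq_sub_iff_add_eq_add] at hrel ⊢
      linear_combination -hrel
    have hcyc2 : (openSegment ℝ (s 1) (s 3) ∩ openSegment ℝ (s 2) (s 0)).Nonempty := by
      obtain ⟨p, h02, h13⟩ := hcyc
      exact ⟨p, h13, by rwa [openSegment_symm]⟩
    have hset : ({s 1, s 2, s 3, s 0} : Set (ℝ × ℝ)) = Set.range s := by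
      rw [hrange]
      ext p
      simp only [Set.mem_insert_iff, Set.mem_singleton_iff]
      tauto
    obtain ⟨α, hα, e, he⟩ := key (s 1) (s 2) (s 3) (s 0)
      (hcol 1 2 3 (by decide) (by decide) (by decide)) hcyc2 c hrel hc1
    exact ⟨α, hα, e, by rw [← hset]; exact he⟩
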